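/- arXiv:1807.05227 — 4 statements merged into one kernel-verified Lean document; each statement's English description precedes it below -/
import Mathlib

section
/- Let m ≥ 2. The Lie subring of M_m(ℍ) generated under the commutator bracket [x,y] = xy − yx by the set of all matrices a·E_{ij} with a ∈ ℍ and i ≠ j equals the set {x ∈ M_m(ℍ) : re(tr x) = 0} of matrices whose trace is a purely imaginary quaternion. -/
open scoped Quaternion

/-- The smallest additive subgroup containing `s` and closed under the
commutator bracket `x * y - y * x`. -/
def lieClosure {M : Type*} [NonUnitalNonAssocRing M] (s : Set M) : AddSubgroup M :=
  sInf {S : AddSubgroup M | s ⊆ S ∧ ∀ x ∈ S, ∀ y ∈ S, x * y - y * x ∈ S}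

open Matrix in
lemma std_sub' {m : ℕ} (i j : Fin m) (a b : ℍ[ℝ]) :
    single i j (a - b) = single i j a - single i j b := by
  rw [eq_sub_iff_add_eq, ← Matrix.single_add, sub_add_cancel]

open Matrix in
lemma std_sum' {m : ℕ} {ι : Type*} (s : Finset ι) (i j : Fin m) (c : ι → ℍ[ℝ]) :
    ∑ k ∈ s, single i j (c k) = single i j (∑ k ∈ s, c k) := by
  induction s using Finset.cons_induction with
  | empty => simp
  | cons a s ha ih => simp [Finset.sum_cons, ih, Matrix.single_add]

lemma quat_re_sum {ι : Type*} (s : Finset ι) (f : ι → ℍ[ℝ]) :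
    (∑ k ∈ s, f k).re = ∑ k ∈ s, (f k).re := by
  induction s using Finset.cons_induction with
  | empty => simp
  | cons a s ha ih => simp [Finset.sum_cons, ih]

lemma quat_coe_sum {ι : Type*} (s : Finset ι) (f : ι → ℝ) :
    ((∑ k ∈ s, f k : ℝ) : ℍ[ℝ]) = ∑ k ∈ s, ((f k : ℝ) : ℍ[ℝ]) := by
  induction s using Finset.cons_induction with
  | empty => simp
  | cons a s ha ih => simp [Finset.sum_cons, ih, Quaternion.coe_add]

theorem sl_quaternion_eq_trace_imaginary
    {m : ℕ} (hm : 2 ≤ m) :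
    (lieClosure {x : Matrix (Fin m) (Fin m) ℍ[ℝ] |
        ∃ (a : ℍ[ℝ]) (i j : Fin m), i ≠ j ∧ x = Matrix.single i j a} :
      Set (Matrix (Fin m) (Fin m) ℍ[ℝ])) =
    {x : Matrix (Fin m) (Fin m) ℍ[ℝ] | x.trace.re = 0} := by
  classical
  set s : Set (Matrix (Fin m) (Fin m) ℍ[ℝ]) :=
    {x | ∃ (a : ℍ[ℝ]) (i j : Fin m), i ≠ j ∧ x = Matrix.single i j a} with hs
  set G := lieClosure s with hG
  have hgen : ∀ (a : ℍ[ℝ]) (i j : Fin m), i ≠ j → Matrix.single i j a ∈ G := by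
    intro a i j h
    exact AddSubgroup.mem_sInf.2 fun S hS => hS.1 ⟨a, i, j, h, rfl⟩
  have hbr : ∀ x ∈ G, ∀ y ∈ G, x * y - y * x ∈ G := by
    intro x hx y hy
    exact AddSubgroup.mem_sInf.2 fun S hS =>
      hS.2 x (AddSubgroup.mem_sInf.1 hx S hS) y (AddSubgroup.mem_sInf.1 hy S hS)
  ext x
  simp only [Set.mem_setOf_eq, SetLike.mem_coe]
  constructor
  · intro hx
    let T : AddSubgroup (Matrix (Fin m) (Fin m) ℍ[ℝ]) :=
      { carrier := {x | x.trace.re = 0}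
        add_mem' := by
          intro a b ha hb
          simp only [Set.mem_setOf_eq, Matrix.trace_add, Quaternion.re_add] at *
          rw [ha, hb, add_zero]
        zero_mem' := by simp
        neg_mem' := by
          intro a ha
          simp only [Set.mem_setOf_eq, Matrix.trace_neg, Quaternion.re_neg] at *
          rw [ha, neg_zero] }
    have hre : ∀ a b : Matrix (Fin m) (Fin m) ℍ[ℝ], ((a * b).trace).re = ((b * a).trace).re := by
      intro a b
      simp only [Matrix.trace, Matrix.diag, Matrix.mul_apply, quat_re_sum]
      rw [Finset.sum_comm]
      refine Finset.sum_congr rfl fun i _ => Finset.sum_congr rfl fun k _ => ?_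
      simp only [Quaternion.re_mul]
      ring
    have hTs : G ≤ T := by
      apply sInf_le
      constructor
      · rintro y ⟨a, i, j, hij, rfl⟩
        show (Matrix.single i j a).trace.re = 0
        rw [Matrix.trace_single_eq_of_ne (h := hij)]
        rfl
      · intro u hu v hv
        show ((u * v - v * u).trace).re = 0
        rw [Matrix.trace_sub, Quaternion.re_sub, hre, sub_self]
    exact hTs hx
  · intro hx
    have hdiff : ∀ (a : ℍ[ℝ]) (i j : Fin m), i ≠ j →
        Matrix.single i i a - Matrix.single j j a ∈ G := by
      intro a i j h
      have := hbr _ (hgen a i j h) _ (hgen 1 j i h.symm)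
      simpa using this
    have hcomm : ∀ (a b : ℍ[ℝ]) (i j : Fin m), i ≠ j →
        Matrix.single i i (a * b - b * a) ∈ G := by
      intro a b i j h
      have h1 := hbr _ (hgen a i j h) _ (hgen b j i h.symm)
      rw [Matrix.single_mul_single_same, Matrix.single_mul_single_same] at h1
      have h2 := G.sub_mem h1 (hdiff (b * a) i j h)
      rw [std_sub']
      convert h2 using 1
      abel
    have hpure : ∀ (c : ℍ[ℝ]), c.re = 0 → ∀ i : Fin m, Matrix.single i i c ∈ G := by
      intro c hc i
      obtain ⟨j, hj⟩ : ∃ j : Fin m, i ≠ j := by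
        rcases eq_or_ne i ⟨0, by omega⟩ with h | h
        · exact ⟨⟨1, by omega⟩, by rw [h]; intro hh; exact absurd (congrArg Fin.val hh) (by simp)⟩
        · exact ⟨⟨0, by omega⟩, h⟩
      set q1 : ℍ[ℝ] := ⟨0, 0, c.imI / 2, 0⟩ with hq1
      set p1 : ℍ[ℝ] := ⟨0, 0, 0, 1⟩ with hp1
      set q2 : ℍ[ℝ] := ⟨0, 0, 0, c.imJ / 2⟩ with hq2
      set p2 : ℍ[ℝ] := ⟨0, 1, 0, 0⟩ with hp2
      set q3 : ℍ[ℝ] := ⟨0, c.imK / 2, 0, 0⟩ with hq3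
      set p3 : ℍ[ℝ] := ⟨0, 0, 1, 0⟩ with hp3
      have hc' : c = (q1 * p1 - p1 * q1) + (q2 * p2 - p2 * q2) + (q3 * p3 - p3 * q3) := by
        ext <;>
          simp only [Quaternion.re_mul, Quaternion.imI_mul, Quaternion.imJ_mul,
            Quaternion.imK_mul, Quaternion.re_add, Quaternion.imI_add, Quaternion.imJ_add,
            Quaternion.imK_add, Quaternion.re_sub, Quaternion.imI_sub, Quaternion.imJ_sub,
            Quaternion.imK_sub, hc] <;> rw [hq1, hp1, hq2, hp2, hq3, hp3] <;> simp <;> ring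
      rw [hc', Matrix.single_add, Matrix.single_add]
      exact G.add_mem (G.add_mem (hcomm _ _ i j hj) (hcomm _ _ i j hj)) (hcomm _ _ i j hj)
    set i0 : Fin m := ⟨0, by omega⟩ with hi0
    set g : Fin m → Fin m → Matrix (Fin m) (Fin m) ℍ[ℝ] := fun i j =>
      if i = j then Matrix.single i i (x i i)
        - Matrix.single i0 i0 (((x i i).re : ℝ) : ℍ[ℝ])
      else Matrix.single i j (x i j) with hgdef
    have hgmem : ∀ i j, g i j ∈ G := by
      intro i j
      by_cases h : i = j
      · subst h
        simp only [hgdef, if_pos rfl]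
        have e1 : Matrix.single i i (x i i)
              - Matrix.single i0 i0 (((x i i).re : ℝ) : ℍ[ℝ])
            = Matrix.single i i (x i i - (((x i i).re : ℝ) : ℍ[ℝ]))
              + (Matrix.single i i (((x i i).re : ℝ) : ℍ[ℝ])
                - Matrix.single i0 i0 (((x i i).re : ℝ) : ℍ[ℝ])) := by
          rw [std_sub']; abel
        rw [e1]
        refine G.add_mem (hpure _ ?_ i) ?_
        · simp [Quaternion.re_sub, Quaternion.re_coe]
        · rcases eq_or_ne i i0 with h | h
          · rw [h]; simpa using G.zero_mem
          · exact hdiff _ i i0 h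
      · simp only [hgdef, if_neg h]
        exact hgen _ i j h
    have hrow : ∀ i, ∑ j, g i j
        = (∑ j, Matrix.single i j (x i j))
          - Matrix.single i0 i0 (((x i i).re : ℝ) : ℍ[ℝ]) := by
      intro i
      have he : ∀ j, g i j = Matrix.single i j (x i j)
          - (if j = i then Matrix.single i0 i0 (((x i i).re : ℝ) : ℍ[ℝ]) else 0) := by
        intro j
        by_cases h : i = j
        · subst h; simp [hgdef]
        · simp [hgdef, if_neg h, if_neg (Ne.symm h)]
      rw [Finset.sum_congr rfl (fun j _ => he j), Finset.sum_sub_distrib]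
      congr 1
      simp
    have hkey : x = ∑ i, ∑ j, g i j := by
      have h2 : ∑ i, ∑ j, g i j
          = (∑ i, ∑ j, Matrix.single i j (x i j))
            - ∑ i, Matrix.single i0 i0 (((x i i).re : ℝ) : ℍ[ℝ]) := by
        rw [← Finset.sum_sub_distrib]
        exact Finset.sum_congr rfl fun i _ => hrow i
      have htr : ∑ i, (x i i).re = 0 := by
        have h3 : x.trace.re = ∑ i, (x i i).re := by
          simp [Matrix.trace, Matrix.diag, quat_re_sum]
        rw [← h3, hx]
      rw [h2, std_sum', ← quat_coe_sum, htr]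
      simp [← Matrix.matrix_eq_sum_single]
    rw [hkey]
    exact AddSubgroup.sum_mem G fun i _ => AddSubgroup.sum_mem G fun j _ => hgmem i j
end

section
/- Let G be the subgroup of the group of units of the matrix ring M_2(ℍ) generated by all transvections I + a·E_{ij} with a ∈ ℍ and i ≠ j. For a hermitian matrix x ∈ M_2(ℍ) (i.e., x equals its quaternionic conjugate transpose xᴴ, so that x₁₁ and x₂₂ are real), define q(x) = re(x₁₁)·re(x₂₂) − re(x₁₂ · conj(x₁₂)). Then for every y ∈ G and every hermitian x ∈ M_2(ℍ), the matrix y x yᴴ is hermitian and q(y x yᴴ) = q(x). -/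
open scoped Matrix Quaternion

/-- The quadratic form `q(x) = re(x₁₁)·re(x₂₂) − re(x₁₂ · conj(x₁₂))` on 2×2 quaternionic
matrices (intended for hermitian ones). -/
noncomputable def hermQuadForm (x : Matrix (Fin 2) (Fin 2) ℍ[ℝ]) : ℝ :=
  (x 0 0).re * (x 1 1).re - (x 0 1 * star (x 0 1)).re

private lemma herm_conj (y x : Matrix (Fin 2) (Fin 2) ℍ[ℝ]) (hx : x.IsHermitian) :
    (y * x * yᴴ).IsHermitian := by
  simp [Matrix.IsHermitian, Matrix.conjTranspose_mul, hx.eq, mul_assoc]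

private lemma q_gen (a : ℍ[ℝ]) (i j : Fin 2) (hij : i ≠ j)
    (x : Matrix (Fin 2) (Fin 2) ℍ[ℝ]) (hx : x.IsHermitian) :
    hermQuadForm ((1 + Matrix.single i j a) * x * (1 + Matrix.single i j a)ᴴ)
      = hermQuadForm x := by
  have h10 : x 1 0 = star (x 0 1) := by
    conv_lhs => rw [← hx.eq]
    rfl
  have h00 : x 0 0 = ((x 0 0).re : ℍ[ℝ]) := by
    rw [← Quaternion.star_eq_self]
    conv_lhs => rw [← hx.eq]; rw [Matrix.conjTranspose_apply, star_star]
  have h11 : x 1 1 = ((x 1 1).re : ℍ[ℝ]) := by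
    rw [← Quaternion.star_eq_self]
    conv_lhs => rw [← hx.eq]; rw [Matrix.conjTranspose_apply, star_star]
  fin_cases i <;> fin_cases j <;> simp_all <;>
  · simp only [hermQuadForm, Matrix.mul_apply, Fin.sum_univ_two, Matrix.conjTranspose_apply,
      Matrix.add_apply, Matrix.one_apply, Matrix.single]
    norm_num
    rw [h10, h00, h11]
    set p := x 0 1
    set r := (x 0 0).re
    set s := (x 1 1).re
    simp [Quaternion.re_mul, Quaternion.re_add, mul_add, add_mul, star_add, star_mul]
    ring

theorem transvection_group_action_preserves_hermitian_and_form :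
    ∀ y ∈ Subgroup.closure {u : (Matrix (Fin 2) (Fin 2) ℍ[ℝ])ˣ |
        ∃ (a : ℍ[ℝ]) (i j : Fin 2), i ≠ j ∧
          u.val = 1 + Matrix.single i j a},
      ∀ x : Matrix (Fin 2) (Fin 2) ℍ[ℝ], x.IsHermitian →
        (y.val * x * y.valᴴ).IsHermitian ∧
        hermQuadForm (y.val * x * y.valᴴ) = hermQuadForm x := by
  intro y hy
  induction hy using Subgroup.closure_induction with
  | mem u hu =>
    obtain ⟨a, i, j, hij, hu⟩ := hu
    intro x hx
    exact ⟨herm_conj _ _ hx, by rw [hu]; exact q_gen a i j hij x hx⟩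
  | one =>
    intro x hx
    simp only [Units.val_one, Matrix.conjTranspose_one, one_mul, mul_one]
    exact ⟨hx, trivial⟩
  | mul u v hu hv ihu ihv =>
    intro x hx
    refine ⟨herm_conj _ _ hx, ?_⟩
    have h1 := (ihv x hx)
    have h2 := ihu _ (herm_conj v.val x hx)
    calc hermQuadForm ((u * v).val * x * (u * v).valᴴ)
        = hermQuadForm (u.val * (v.val * x * v.valᴴ) * u.valᴴ) := by
          simp [Units.val_mul, Matrix.conjTranspose_mul, mul_assoc]
      _ = hermQuadForm (v.val * x * v.valᴴ) := h2.2
      _ = hermQuadForm x := h1.2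
  | inv u hu ihu =>
    intro x hx
    refine ⟨herm_conj _ _ hx, ?_⟩
    have hy : ((u⁻¹).val * x * (u⁻¹).valᴴ).IsHermitian := herm_conj _ _ hx
    have := (ihu _ hy).2
    have key : u.val * ((u⁻¹).val * x * (u⁻¹).valᴴ) * u.valᴴ = x := by
      have h1 : u.val * (u⁻¹).val = 1 := by
        rw [← Units.val_mul, mul_inv_cancel, Units.val_one]
      have h2 : (u⁻¹).valᴴ * u.valᴴ = 1 := by
        rw [← Matrix.conjTranspose_mul, ← Units.val_mul, mul_inv_cancel, Units.val_one,
          Matrix.conjTranspose_one]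
      calc u.val * ((u⁻¹).val * x * (u⁻¹).valᴴ) * u.valᴴ
          = (u.val * (u⁻¹).val) * x * ((u⁻¹).valᴴ * u.valᴴ) := by
            noncomm_ring
        _ = x := by rw [h1, h2, one_mul, mul_one]
    rw [key] at this
    exact this.symm
end

section
/- Let y ∈ M_2(ℍ). If y x yᴴ = x for every hermitian matrix x ∈ M_2(ℍ), then y = I or y = −I. -/
open scoped Matrix Quaternion

lemma quat_sq_zero (a : ℍ[ℝ]) (h : a * star a = 0) : a = 0 := by
  rw [Quaternion.self_mul_star] at h
  rw [show (0:ℍ[ℝ]) = ((0:ℝ):ℍ[ℝ]) from rfl] at h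
  exact Quaternion.normSq_eq_zero.mp (Quaternion.coe_injective h)

lemma qstar_mk (a b c d : ℝ) : star (⟨a,b,c,d⟩ : ℍ[ℝ]) = ⟨a,-b,-c,-d⟩ :=
  Quaternion.ext _ _ (Quaternion.re_star _) rfl rfl rfl

lemma quat_key (a d : ℍ[ℝ]) (h1 : a * star a = 1) (h2 : a * star d = 1)
    (h3 : a * ⟨0,1,0,0⟩ * star d = ⟨0,1,0,0⟩)
    (h4 : a * ⟨0,0,1,0⟩ * star d = ⟨0,0,1,0⟩) :
    (a = 1 ∧ d = 1) ∨ (a = -1 ∧ d = -1) := by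
  have ha0 : a ≠ 0 := by rintro rfl; simp at h1
  have hd : d = a := by
    have := mul_left_cancel₀ ha0 (h1.trans h2.symm)
    exact (star_injective this).symm
  rw [hd] at h2 h3 h4 ⊢
  have hsa : star a * a = 1 := by
    rw [Quaternion.star_mul_self, ← Quaternion.self_mul_star]; exact h1
  have hci : a * ⟨0,1,0,0⟩ = ⟨0,1,0,0⟩ * a := by
    have := congrArg (· * a) h3
    simpa [mul_assoc, hsa] using this
  have hcj : a * ⟨0,0,1,0⟩ = ⟨0,0,1,0⟩ * a := by
    have := congrArg (· * a) h4
    simpa [mul_assoc, hsa] using this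
  obtain ⟨I, hI⟩ : ∃ I : ℍ[ℝ], ⟨0,1,0,0⟩ = I := ⟨_, rfl⟩
  obtain ⟨J, hJ⟩ : ∃ J : ℍ[ℝ], ⟨0,0,1,0⟩ = J := ⟨_, rfl⟩
  rw [hI] at hci
  rw [hJ] at hcj
  rw [Quaternion.ext_iff] at hci hcj h1
  simp only [Quaternion.re_mul, Quaternion.imI_mul,
    Quaternion.imJ_mul, Quaternion.imK_mul, Quaternion.re_star, Quaternion.imI_star,
    Quaternion.imJ_star, Quaternion.imK_star] at hci hcj h1
  subst hI hJ
  obtain ⟨w, x, yy, z⟩ := a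
  obtain ⟨e1, e2⟩ := hci
  obtain ⟨f1, f2⟩ := hcj
  have hx : x = 0 := by linarith
  have hyy : yy = 0 := by linarith
  have hz : z = 0 := by linarith
  subst hx; subst hyy; subst hz
  simp at h1
  have hw : w = 1 ∨ w = -1 := by
    rcases mul_self_eq_one_iff.mp h1 with h | h
    · exact Or.inl h
    · exact Or.inr h
  rcases hw with rfl | rfl
  · left; constructor <;> rfl
  · right
    constructor <;> · apply Quaternion.ext <;> simp

theorem trivial_action_on_hermitian_quaternion_matrices
    (y : Matrix (Fin 2) (Fin 2) ℍ[ℝ])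
    (h : ∀ x : Matrix (Fin 2) (Fin 2) ℍ[ℝ], x.IsHermitian → y * x * yᴴ = x) :
    y = 1 ∨ y = -1 := by
  have hx2 : (!![1,0;0,0] : Matrix (Fin 2) (Fin 2) ℍ[ℝ]).IsHermitian := by
    refine Matrix.ext fun i j => ?_; fin_cases i <;> fin_cases j <;>
      simp [Matrix.conjTranspose_apply]
  have hx3 : (!![0,0;0,1] : Matrix (Fin 2) (Fin 2) ℍ[ℝ]).IsHermitian := by
    refine Matrix.ext fun i j => ?_; fin_cases i <;> fin_cases j <;>
      simp [Matrix.conjTranspose_apply]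
  have hx4 : (!![0,1;1,0] : Matrix (Fin 2) (Fin 2) ℍ[ℝ]).IsHermitian := by
    refine Matrix.ext fun i j => ?_; fin_cases i <;> fin_cases j <;>
      simp [Matrix.conjTranspose_apply]
  have hx5 : (!![0,⟨0,1,0,0⟩;⟨0,-1,0,0⟩,0] : Matrix (Fin 2) (Fin 2) ℍ[ℝ]).IsHermitian := by
    refine Matrix.ext fun i j => ?_; fin_cases i <;> fin_cases j <;>
      simp [Matrix.conjTranspose_apply] <;>
      exact (qstar_mk _ _ _ _).trans (by simp)
  have hx6 : (!![0,⟨0,0,1,0⟩;⟨0,0,-1,0⟩,0] : Matrix (Fin 2) (Fin 2) ℍ[ℝ]).IsHermitian := by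
    refine Matrix.ext fun i j => ?_; fin_cases i <;> fin_cases j <;>
      simp [Matrix.conjTranspose_apply] <;>
      exact (qstar_mk _ _ _ _).trans (by simp)
  have e2 := h _ hx2
  have e3 := h _ hx3
  have e4 := h _ hx4
  have e5 := h _ hx5
  have e6 := h _ hx6
  have hc : y 1 0 = 0 := by
    have := congrFun (congrFun e2 1) 1
    simp [Matrix.mul_apply, Fin.sum_univ_two, Matrix.conjTranspose_apply] at this
    exact this
  have hb : y 0 1 = 0 := by
    have := congrFun (congrFun e3 0) 0
    simp [Matrix.mul_apply, Fin.sum_univ_two, Matrix.conjTranspose_apply] at this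
    exact this
  have h1 : y 0 0 * star (y 0 0) = 1 := by
    have := congrFun (congrFun e2 0) 0
    simpa [Matrix.mul_apply, Fin.sum_univ_two, Matrix.conjTranspose_apply] using this
  have h2 : y 0 0 * star (y 1 1) = 1 := by
    have := congrFun (congrFun e4 0) 1
    simpa [Matrix.mul_apply, Fin.sum_univ_two, Matrix.conjTranspose_apply, hb, hc] using this
  have h3 : y 0 0 * ⟨0,1,0,0⟩ * star (y 1 1) = ⟨0,1,0,0⟩ := by
    have := congrFun (congrFun e5 0) 1
    exact (mul_assoc _ _ _).trans (by
      simpa [Matrix.mul_apply, Fin.sum_univ_two, Matrix.conjTranspose_apply, hb, hc, mul_assoc]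
        using this)
  have h4 : y 0 0 * ⟨0,0,1,0⟩ * star (y 1 1) = ⟨0,0,1,0⟩ := by
    have := congrFun (congrFun e6 0) 1
    exact (mul_assoc _ _ _).trans (by
      simpa [Matrix.mul_apply, Fin.sum_univ_two, Matrix.conjTranspose_apply, hb, hc, mul_assoc]
        using this)
  rcases quat_key (y 0 0) (y 1 1) h1 h2 h3 h4 with ⟨ha, hd⟩ | ⟨ha, hd⟩
  · left
    refine Matrix.ext fun i j => ?_; fin_cases i <;> fin_cases j <;>
      simp [Matrix.one_apply, ha, hb, hc, hd]
  · right
    refine Matrix.ext fun i j => ?_; fin_cases i <;> fin_cases j <;>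
      simp [Matrix.one_apply, ha, hb, hc, hd]
end

section
/- The Lie subring of M_2(ℍ) generated under the commutator bracket [x,y] = xy − yx by the set of all matrices a·E_{ij} with a ∈ ℍ and i ≠ j is a real linear subspace of M_2(ℍ) of real dimension 15. -/
open scoped Quaternion

namespace Sl2Aux

open Matrix Module

noncomputable abbrev Q := ℍ[ℝ]
noncomputable abbrev Mat := Matrix (Fin 2) (Fin 2) Q

def gens : Set Mat :=
  {x : Mat | ∃ (a : Q) (i j : Fin 2), i ≠ j ∧ x = Matrix.single i j a}

noncomputable def f : Mat →ₗ[ℝ] ℝ where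
  toFun M := (M 0 0).re + (M 1 1).re
  map_add' x y := by simp [Matrix.add_apply]; ring
  map_smul' r x := by simp [Matrix.smul_apply]; ring

lemma f_apply (M : Mat) : f M = (M 0 0).re + (M 1 1).re := rfl

lemma gen_mem (a : Q) (i j : Fin 2) (h : i ≠ j) :
    Matrix.single i j a ∈ lieClosure gens :=
  AddSubgroup.mem_sInf.2 fun _ hS => hS.1 ⟨a, i, j, h, rfl⟩

lemma br_mem {x y : Mat} (hx : x ∈ lieClosure gens) (hy : y ∈ lieClosure gens) :
    x * y - y * x ∈ lieClosure gens :=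
  AddSubgroup.mem_sInf.2 fun S hS =>
    hS.2 x (AddSubgroup.mem_sInf.1 hx S hS) y (AddSubgroup.mem_sInf.1 hy S hS)

lemma sbm_sub (i j : Fin 2) (a b : Q) :
    Matrix.single i j (a - b) =
      Matrix.single i j a - Matrix.single i j b := by
  refine Matrix.ext fun i' j' => ?_
  simp only [Matrix.single, Matrix.sub_apply, Matrix.of_apply]
  split <;> simp

lemma diag_mem (a : Q) :
    Matrix.single 0 0 a - Matrix.single 1 1 a ∈ lieClosure gens := by
  have h := br_mem (gen_mem a 0 1 (by decide)) (gen_mem 1 1 0 (by decide))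
  simpa using h

lemma comm_mem (a b : Q) :
    Matrix.single 1 1 (a * b - b * a) ∈ lieClosure gens := by
  have h1 := br_mem (gen_mem a 0 1 (by decide)) (gen_mem b 1 0 (by decide))
  have h2 := diag_mem (a * b)
  have h3 := AddSubgroup.sub_mem _ h1 h2
  have e : (Matrix.single 1 1 (a * b - b * a) : Mat) =
      (Matrix.single 0 0 (a * b) - Matrix.single 1 1 (b * a)) -
        (Matrix.single 0 0 (a * b) - Matrix.single 1 1 (a * b)) := by
    rw [sbm_sub]; abel
  rw [e]
  simpa using h3

lemma pure_mem (c : Q) (hc : c.re = 0) :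
    Matrix.single 1 1 c ∈ lieClosure gens := by
  set a1 : Q := ⟨0, 0, c.imI / 2, 0⟩
  set b1 : Q := ⟨0, 0, 0, 1⟩
  set a2 : Q := ⟨0, 0, 0, c.imJ / 2⟩
  set b2 : Q := ⟨0, 1, 0, 0⟩
  set a3 : Q := ⟨0, c.imK / 2, 0, 0⟩
  set b3 : Q := ⟨0, 0, 1, 0⟩
  have h := AddSubgroup.add_mem _ (AddSubgroup.add_mem _ (comm_mem a1 b1) (comm_mem a2 b2))
      (comm_mem a3 b3)
  have hq : c = a1 * b1 - b1 * a1 + (a2 * b2 - b2 * a2) + (a3 * b3 - b3 * a3) := by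
    ext <;>
      simp [Quaternion.re_mul, Quaternion.imI_mul,
        Quaternion.imJ_mul, Quaternion.imK_mul] <;>
      simp [a1, b1, a2, b2, a3, b3, hc] <;> ring
  have e : (Matrix.single 1 1 c : Mat) =
      Matrix.single 1 1 (a1 * b1 - b1 * a1) +
        Matrix.single 1 1 (a2 * b2 - b2 * a2) +
        Matrix.single 1 1 (a3 * b3 - b3 * a3) := by
    rw [← Matrix.single_add, ← Matrix.single_add, ← hq]
  rw [e]; exact h

lemma decomp (M : Mat) :
    M = Matrix.single 0 1 (M 0 1) + Matrix.single 1 0 (M 1 0) +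
        (Matrix.single 0 0 (M 0 0) - Matrix.single 1 1 (M 0 0)) +
        Matrix.single 1 1 (M 0 0 + M 1 1) := by
  refine Matrix.ext fun i j => ?_
  fin_cases i <;> fin_cases j <;>
    simp only [Matrix.add_apply, Matrix.sub_apply, Fin.mk_zero, Fin.mk_one, Fin.isValue,
      Matrix.single, Matrix.of_apply] <;> norm_num

lemma ker_subset : (LinearMap.ker f : Set Mat) ⊆ lieClosure gens := by
  intro M hM
  have hM' : (M 0 0).re + (M 1 1).re = 0 := hM
  rw [decomp M]
  refine AddSubgroup.add_mem _ (AddSubgroup.add_mem _ (AddSubgroup.add_mem _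
    (gen_mem _ 0 1 (by decide)) (gen_mem _ 1 0 (by decide))) (diag_mem _)) ?_
  exact pure_mem _ (by simp [Quaternion.re_add]; linarith)

lemma closure_subset : (lieClosure gens : Set Mat) ⊆ (LinearMap.ker f : Set Mat) := by
  intro M hM
  refine AddSubgroup.mem_sInf.1 hM (LinearMap.ker f).toAddSubgroup ⟨?_, ?_⟩
  · rintro x ⟨a, i, j, hij, rfl⟩
    show f _ = 0
    rw [f_apply]
    fin_cases i <;> fin_cases j <;> first
      | exact absurd rfl hij
      | simp [Matrix.single]
  · intro x _ y _
    show f _ = 0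
    rw [f_apply]
    simp only [Matrix.sub_apply, Matrix.mul_apply,
      Fin.sum_univ_two, Quaternion.re_sub, Quaternion.re_add, Quaternion.re_mul]
    ring

theorem main :
    ∃ S : Submodule ℝ Mat,
      (S : Set Mat) = (lieClosure gens : Set Mat) ∧ Module.finrank ℝ S = 15 := by
  refine ⟨LinearMap.ker f, le_antisymm closure_subset ker_subset |>.symm ▸ rfl, ?_⟩
  have hsurj : Function.Surjective f := fun r =>
    ⟨Matrix.single 0 0 (r : Q), by simp [f]⟩
  have h16 : Module.finrank ℝ Mat = 16 := by
    rw [Module.finrank_matrix]; simp [Quaternion.finrank_eq_four]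
  have := LinearMap.finrank_range_add_finrank_ker f
  rw [LinearMap.range_eq_top.2 hsurj, finrank_top, h16] at this
  simp at this
  omega

end Sl2Aux

theorem sl2_quaternion_dimension :
    ∃ S : Submodule ℝ (Matrix (Fin 2) (Fin 2) ℍ[ℝ]),
      (S : Set (Matrix (Fin 2) (Fin 2) ℍ[ℝ])) =
        (lieClosure {x : Matrix (Fin 2) (Fin 2) ℍ[ℝ] |
          ∃ (a : ℍ[ℝ]) (i j : Fin 2), i ≠ j ∧ x = Matrix.single i j a} :
            Set (Matrix (Fin 2) (Fin 2) ℍ[ℝ])) ∧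
      Module.finrank ℝ S = 15 := by
  exact Sl2Aux.main
end
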